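/- Let F be a finite field of cardinality p^ℓ, 0 ≤ h < ℓ, λ ∈ F^× with λ^{1+p^h} ≠ 1. Every Galois p^h-self-dual 2-quasi λ-constacyclic code C of length 2n over F has minimum Hamming weight exactly 2; hence the family of such codes is asymptotically bad (the relative minimum distance 2/(2n) tends to 0 as n → ∞). -/

import Mathlib

/-- The `λ`-constacyclic shift on `Fⁿ`. -/
def cshift {F : Type*} [Field F] {n : ℕ} [NeZero n] (lam : F) (a : Fin n → F) :
    Fin n → F :=
  fun i => (if i = 0 then lam else 1) * a (i - 1)

/-- The Galois inner product `⟨a,b⟩ = ∑ aᵢ bᵢ^e` on `Fⁿ × Fⁿ`, where `e = p^h`. -/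
def gin {F : Type*} [Field F] {n : ℕ} (e : ℕ)
    (a b : (Fin n → F) × (Fin n → F)) : F :=
  (∑ i, a.1 i * b.1 i ^ e) + (∑ i, a.2 i * b.2 i ^ e)

/-- The Hamming weight of a word in `Fⁿ × Fⁿ`. -/
noncomputable def wt {F : Type*} [Field F] {n : ℕ} (x : (Fin n → F) × (Fin n → F)) : ℕ :=
  {i | x.1 i ≠ 0}.ncard + {i | x.2 i ≠ 0}.ncard

open Fin.NatCast Fin.CommRing

theorem stmt_13 {F : Type*} [Field F] [Fintype F] {p ℓ h n : ℕ} [NeZero n]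
    (hp : p.Prime) (hcard : Fintype.card F = p ^ ℓ) (hh : h < ℓ)
    (lam : F) (hlam : lam ≠ 0) (hlam1 : lam ^ (1 + p ^ h) ≠ 1)
    (C : Submodule F ((Fin n → F) × (Fin n → F)))
    (hcc : ∀ c ∈ C, (cshift lam c.1, cshift lam c.2) ∈ C)
    (hsd : (C : Set ((Fin n → F) × (Fin n → F))) = {a | ∀ c ∈ C, gin (p ^ h) c a = 0}) :
    (∃ x ∈ C, x ≠ 0 ∧ wt x = 2) ∧ ∀ x ∈ C, x ≠ 0 → 2 ≤ wt x := by
  set e := p ^ h with he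
  have he0 : e ≠ 0 := (pow_pos hp.pos h).ne'
  have h1e0 : 1 + e ≠ 0 := by omega
  -- self-orthogonality
  have horth : ∀ c ∈ C, ∀ d ∈ C, gin e c d = 0 := by
    intro c hc d hd
    have hmem : d ∈ {a | ∀ c ∈ C, gin e c a = 0} := by
      rw [← hsd]; exact hd
    exact hmem c hc
  have hlam1' : lam ^ (1 + e) - 1 ≠ 0 := sub_ne_zero.mpr hlam1
  -- shift identity for the pairing sum
  have hshift : ∀ a b : Fin n → F,
      ∑ i, cshift lam a i * cshift lam b i ^ e
        = (∑ i, a i * b i ^ e) + (lam ^ (1 + e) - 1) * (a (-1) * b (-1) ^ e) := by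
    intro a b
    have h1 : ∑ i, cshift lam a i * cshift lam b i ^ e
        = ∑ j, (if j = (-1 : Fin n) then lam ^ (1 + e) else 1) * (a j * b j ^ e) := by
      refine Fintype.sum_equiv (Equiv.subRight (1 : Fin n)) _ _ ?_
      intro i
      simp only [Equiv.subRight_apply, cshift]
      by_cases hi : i = (0 : Fin n)
      · have h01 : ((0 : Fin n) - 1) = (-1 : Fin n) := by ring
        rw [hi, if_pos rfl, if_pos h01, mul_pow]
        ring
      · have hne : i - 1 ≠ (-1 : Fin n) := by
          intro hc
          exact hi (by linear_combination (norm := ring_nf) hc)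
        rw [if_neg hi, if_neg hne]
        ring
    have h2 : ∀ j : Fin n, (if j = (-1 : Fin n) then lam ^ (1 + e) else 1) * (a j * b j ^ e)
        = a j * b j ^ e + (if j = (-1 : Fin n) then (lam ^ (1 + e) - 1) * (a j * b j ^ e) else 0) := by
      intro j
      by_cases hj : j = (-1 : Fin n) <;> simp [hj] <;> ring
    rw [h1]
    simp_rw [h2]
    rw [Finset.sum_add_distrib, Finset.sum_ite_eq' Finset.univ (-1 : Fin n)]
    simp
  -- step S2: the relation at coordinate -1
  have hS2 : ∀ c ∈ C, ∀ d ∈ C,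
      c.1 (-1) * d.1 (-1) ^ e + c.2 (-1) * d.2 (-1) ^ e = 0 := by
    intro c hc d hd
    have h0 := horth c hc d hd
    have h1 := horth _ (hcc c hc) _ (hcc d hd)
    unfold gin at h0 h1
    simp only at h1
    rw [hshift, hshift] at h1
    have h2 : (lam ^ (1 + e) - 1) *
        (c.1 (-1) * d.1 (-1) ^ e + c.2 (-1) * d.2 (-1) ^ e) = 0 := by
      linear_combination h1 - h0
    rcases mul_eq_zero.mp h2 with hz | hz
    · exact absurd hz hlam1'
    · exact hz
  -- step S3 via induction over shifts: the relation at every coordinate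
  have hS3k : ∀ k : ℕ, ∀ c ∈ C, ∀ d ∈ C,
      c.1 (-1 - (k : Fin n)) * d.1 (-1 - (k : Fin n)) ^ e
        + c.2 (-1 - (k : Fin n)) * d.2 (-1 - (k : Fin n)) ^ e = 0 := by
    intro k
    induction k with
    | zero =>
      intro c hc d hd
      simpa using hS2 c hc d hd
    | succ k ih =>
      intro c hc d hd
      have hsh := ih _ (hcc c hc) _ (hcc d hd)
      simp only [cshift] at hsh
      set u : F := if (-1 - (k : Fin n) : Fin n) = 0 then lam else 1 with hu
      have hu0 : u ≠ 0 := by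
        rw [hu]; split
        · exact hlam
        · exact one_ne_zero
      have hidx : (-1 - ((k + 1 : ℕ) : Fin n) : Fin n) = -1 - (k : Fin n) - 1 := by
        push_cast; ring
      rw [hidx]
      have h2 : u ^ (1 + e) *
          (c.1 (-1 - (k : Fin n) - 1) * d.1 (-1 - (k : Fin n) - 1) ^ e
            + c.2 (-1 - (k : Fin n) - 1) * d.2 (-1 - (k : Fin n) - 1) ^ e) = 0 := by
        rw [mul_pow] at hsh
        linear_combination hsh
      rcases mul_eq_zero.mp h2 with hz | hz
      · exact absurd hz (pow_ne_zero _ hu0)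
      · exact hz
  have hS3 : ∀ c ∈ C, ∀ d ∈ C, ∀ j : Fin n,
      c.1 j * d.1 j ^ e + c.2 j * d.2 j ^ e = 0 := by
    intro c hc d hd j
    have hj : (-1 - ((((-1 : Fin n) - j).val : ℕ) : Fin n) : Fin n) = j := by
      rw [Fin.cast_val_eq_self]; ring
    have := hS3k ((-1 - j : Fin n)).val c hc d hd
    rwa [hj] at this
  -- supports of the two halves agree
  have hL : ∀ c ∈ C, ∀ j : Fin n, (c.1 j = 0 ↔ c.2 j = 0) := by
    intro c hc j
    have hkey := hS3 c hc c hc j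
    constructor
    · intro hz
      have : c.2 j ^ (1 + e) = 0 := by
        rw [pow_add, pow_one]; linear_combination hkey - c.1 j ^ e * hz
      exact pow_eq_zero_iff h1e0 |>.mp this
    · intro hz
      have : c.1 j ^ (1 + e) = 0 := by
        rw [pow_add, pow_one]; linear_combination hkey - c.2 j ^ e * hz
      exact pow_eq_zero_iff h1e0 |>.mp this
  -- lower bound on weight
  have hlb : ∀ x ∈ C, x ≠ 0 → 2 ≤ wt x := by
    intro x hx hx0
    have hex : ∃ j : Fin n, x.1 j ≠ 0 ∧ x.2 j ≠ 0 := by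
      by_contra hno
      push_neg at hno
      apply hx0
      have h1 : ∀ j, x.1 j = 0 := by
        intro j
        by_cases h1j : x.1 j = 0
        · exact h1j
        · exact absurd ((hL x hx j).mpr (hno j h1j)) h1j
      have h2 : ∀ j, x.2 j = 0 := fun j => (hL x hx j).mp (h1 j)
      exact Prod.ext (funext h1) (funext h2)
    obtain ⟨j, hj1, hj2⟩ := hex
    have c1 : 0 < {i | x.1 i ≠ 0}.ncard := by
      rw [Set.ncard_pos (Set.toFinite _)]
      exact ⟨j, hj1⟩
    have c2 : 0 < {i | x.2 i ≠ 0}.ncard := by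
      rw [Set.ncard_pos (Set.toFinite _)]
      exact ⟨j, hj2⟩
    unfold wt
    omega
  refine ⟨?_, hlb⟩
  -- existence of a nonzero codeword
  have hCne : ∃ c ∈ C, c ≠ (0 : (Fin n → F) × (Fin n → F)) := by
    by_contra hno
    push_neg at hno
    have hmem : ((fun i => if i = (0 : Fin n) then (1 : F) else 0, 0)
        : (Fin n → F) × (Fin n → F)) ∈ C := by
      have : ((fun i => if i = (0 : Fin n) then (1 : F) else 0, 0)
          : (Fin n → F) × (Fin n → F)) ∈ {a | ∀ c ∈ C, gin e c a = 0} := by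
        intro c hc
        rw [hno c hc]
        simp [gin, zero_pow he0]
      rw [← SetLike.mem_coe, hsd]
      exact this
    have := hno _ hmem
    have h0 := congrFun (congrArg Prod.fst this) 0
    simpa using h0
  obtain ⟨c0, hc0, hc0ne⟩ := hCne
  have hexj : ∃ j : Fin n, c0.1 j ≠ 0 := by
    by_contra hno
    push_neg at hno
    exact hc0ne (Prod.ext (funext hno) (funext fun j => (hL c0 hc0 j).mp (hno j)))
  obtain ⟨j0, hx⟩ := hexj
  have hy : c0.2 j0 ≠ 0 := fun hz => hx ((hL c0 hc0 j0).mpr hz)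
  set β : F := c0.2 j0 / c0.1 j0 with hβdef
  have hβ0 : β ≠ 0 := div_ne_zero hy hx
  have hkey := hS3 c0 hc0 c0 hc0 j0
  have hβ : β ^ (1 + e) = -1 := by
    rw [hβdef, div_pow, div_eq_iff (pow_ne_zero _ hx)]
    rw [pow_add, pow_add, pow_one, pow_one]
    linear_combination hkey
  -- relation c.2 = β • c.1 at coordinate j0
  have hbase : ∀ c ∈ C, c.2 j0 = β * c.1 j0 := by
    intro c hc
    have hcd := hS3 c hc c0 hc0 j0
    have h2 : (c.2 j0 * c0.1 j0 - c0.2 j0 * c.1 j0) * c0.2 j0 ^ e = 0 := by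
      linear_combination c0.1 j0 * hcd - c.1 j0 * hkey
    have h3 : c.2 j0 * c0.1 j0 = c0.2 j0 * c.1 j0 := by
      rcases mul_eq_zero.mp h2 with hz | hz
      · exact sub_eq_zero.mp hz
      · exact absurd hz (pow_ne_zero _ hy)
    rw [hβdef]
    field_simp
    linear_combination h3
  -- extend the relation to all coordinates via shifts
  have hallk : ∀ k : ℕ, ∀ c ∈ C, c.2 (j0 - (k : Fin n)) = β * c.1 (j0 - (k : Fin n)) := by
    intro k
    induction k with
    | zero =>
      intro c hc
      simpa using hbase c hc
    | succ k ih =>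
      intro c hc
      have hsh := ih _ (hcc c hc)
      simp only [cshift] at hsh
      set u : F := if (j0 - (k : Fin n) : Fin n) = 0 then lam else 1 with hu
      have hu0 : u ≠ 0 := by
        rw [hu]; split
        · exact hlam
        · exact one_ne_zero
      have hidx : (j0 - ((k + 1 : ℕ) : Fin n) : Fin n) = j0 - (k : Fin n) - 1 := by
        push_cast; ring
      rw [hidx]
      apply mul_left_cancel₀ hu0
      linear_combination hsh
  have hrel : ∀ c ∈ C, ∀ j : Fin n, c.2 j = β * c.1 j := by
    intro c hc j
    have hj : (j0 - (((j0 - j : Fin n)).val : Fin n) : Fin n) = j := by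
      rw [Fin.cast_val_eq_self]; ring
    have := hallk ((j0 - j : Fin n)).val c hc
    rwa [hj] at this
  -- the explicit weight-2 codeword
  set γ : F := (-β) ^ (p ^ (ℓ - h)) with hγdef
  have hγe : γ ^ e = -β := by
    rw [hγdef, ← pow_mul, he, ← pow_add, Nat.sub_add_cancel hh.le, ← hcard]
    exact FiniteField.pow_card _
  have hγ0 : γ ≠ 0 := pow_ne_zero _ (neg_ne_zero.mpr hβ0)
  set a : (Fin n → F) × (Fin n → F) :=
    (fun i => if i = (0 : Fin n) then γ else 0, fun i => if i = (0 : Fin n) then (1 : F) else 0)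
      with hadef
  have hsum : ∀ (v : Fin n → F) (x : F),
      ∑ i, v i * (if i = (0 : Fin n) then x else 0) ^ e = v 0 * x ^ e := by
    intro v x
    have hterm : ∀ i : Fin n, v i * (if i = (0 : Fin n) then x else 0) ^ e
        = if i = (0 : Fin n) then v i * x ^ e else 0 := by
      intro i
      by_cases hi : i = 0 <;> simp [hi, zero_pow he0]
    simp_rw [hterm]
    rw [Finset.sum_ite_eq' Finset.univ (0 : Fin n)]
    simp
  have haC : a ∈ C := by
    have hmem : a ∈ {x | ∀ c ∈ C, gin e c x = 0} := by
      intro c hc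
      unfold gin
      rw [hadef]
      simp only
      rw [hsum, hsum, hγe, one_pow, hrel c hc 0]
      ring
    rw [← SetLike.mem_coe, hsd]
    exact hmem
  refine ⟨a, haC, ?_, ?_⟩
  · intro hz
    have h0 := congrFun (congrArg Prod.snd hz) 0
    simpa [hadef] using h0
  · have hs1 : {i | a.1 i ≠ 0} = {(0 : Fin n)} := by
      ext i
      by_cases hi : i = 0 <;> simp [hadef, hi, hγ0]
    have hs2 : {i | a.2 i ≠ 0} = {(0 : Fin n)} := by
      ext i
      by_cases hi : i = 0 <;> simp [hadef, hi]
    unfold wt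
    rw [hs1, hs2, Set.ncard_singleton]
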